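/- Let A and B be 2-categories such that the underlying 1-category of A is free on a graph, and let (F, ι, χ): A → B be a pseudofunctor. Then there is a unique strict 2-functor F̄: A → B agreeing with F on objects and on the generating morphisms, together with an invertible icon e: F̄ → F whose component on the empty path at an object X is the unitor ι_X: 1_{FX} ⇒ F1_X, whose component on each generating morphism is the identity, and whose component on a composite h∘g (g generating, h non-identity) is the pasting of e_h with the compositor χ_{h,g}; moreover F̄ acts on a 2-cell φ: f ⇒ g by the composite e_g⁻¹ ∘ Fφ ∘ e_f. -/
import Mathlib


set_option autoImplicit false

universe u v

/-- A (strict) 2-category. -/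
structure TwoCat : Type (u + 1) where
  Obj : Type u
  Hom : Obj → Obj → Type u
  id1 : ∀ X : Obj, Hom X X
  comp1 : ∀ {X Y Z : Obj}, Hom X Y → Hom Y Z → Hom X Z
  Two : ∀ {X Y : Obj}, Hom X Y → Hom X Y → Type u
  id2 : ∀ {X Y : Obj} (f : Hom X Y), Two f f
  vcomp2 : ∀ {X Y : Obj} {f g h : Hom X Y}, Two f g → Two g h → Two f h
  whiskL : ∀ {X Y Z : Obj} (f : Hom X Y) {g h : Hom Y Z}, Two g h → Two (comp1 f g) (comp1 f h)
  whiskR : ∀ {X Y Z : Obj} {f g : Hom X Y}, Two f g → ∀ h : Hom Y Z, Two (comp1 f h) (comp1 g h)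
  id_comp1 : ∀ {X Y : Obj} (f : Hom X Y), comp1 (id1 X) f = f
  comp1_id : ∀ {X Y : Obj} (f : Hom X Y), comp1 f (id1 Y) = f
  comp1_assoc : ∀ {W X Y Z : Obj} (f : Hom W X) (g : Hom X Y) (h : Hom Y Z),
      comp1 (comp1 f g) h = comp1 f (comp1 g h)
  id_vcomp2 : ∀ {X Y : Obj} {f g : Hom X Y} (φ : Two f g), vcomp2 (id2 f) φ = φ
  vcomp2_id : ∀ {X Y : Obj} {f g : Hom X Y} (φ : Two f g), vcomp2 φ (id2 g) = φ
  vcomp2_assoc : ∀ {X Y : Obj} {f g h k : Hom X Y} (φ : Two f g) (ψ : Two g h) (χ : Two h k),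
      vcomp2 (vcomp2 φ ψ) χ = vcomp2 φ (vcomp2 ψ χ)
  whiskL_id2 : ∀ {X Y Z : Obj} (f : Hom X Y) (g : Hom Y Z), whiskL f (id2 g) = id2 (comp1 f g)
  whiskR_id2 : ∀ {X Y Z : Obj} (f : Hom X Y) (g : Hom Y Z), whiskR (id2 f) g = id2 (comp1 f g)
  whiskL_vcomp2 : ∀ {X Y Z : Obj} (f : Hom X Y) {g h k : Hom Y Z} (φ : Two g h) (ψ : Two h k),
      whiskL f (vcomp2 φ ψ) = vcomp2 (whiskL f φ) (whiskL f ψ)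
  whiskR_vcomp2 : ∀ {X Y Z : Obj} {f g h : Hom X Y} (φ : Two f g) (ψ : Two g h) (k : Hom Y Z),
      whiskR (vcomp2 φ ψ) k = vcomp2 (whiskR φ k) (whiskR ψ k)
  whiskL_id1 : ∀ {X Y : Obj} {f g : Hom X Y} (φ : Two f g), HEq (whiskL (id1 X) φ) φ
  whiskR_id1 : ∀ {X Y : Obj} {f g : Hom X Y} (φ : Two f g), HEq (whiskR φ (id1 Y)) φ
  whiskL_comp1 : ∀ {W X Y Z : Obj} (e : Hom W X) (f : Hom X Y) {g h : Hom Y Z} (φ : Two g h),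
      HEq (whiskL (comp1 e f) φ) (whiskL e (whiskL f φ))
  whiskR_comp1 : ∀ {W X Y Z : Obj} {f g : Hom W X} (φ : Two f g) (h : Hom X Y) (k : Hom Y Z),
      HEq (whiskR φ (comp1 h k)) (whiskR (whiskR φ h) k)
  interchange : ∀ {X Y Z : Obj} {f f' : Hom X Y} {g g' : Hom Y Z} (φ : Two f f') (ψ : Two g g'),
      vcomp2 (whiskR φ g) (whiskL f' ψ) = vcomp2 (whiskL f ψ) (whiskR φ g')

namespace TwoCat

variable (B : TwoCat.{u})

/-- Transport a 1-cell along equalities of objects. -/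
def castHom {X X' Y Y' : B.Obj} (hX : X = X') (hY : Y = Y') (f : B.Hom X Y) : B.Hom X' Y' :=
  match hX, hY with
  | rfl, rfl => f

/-- Transport a 2-cell along equalities of its boundary. -/
def cast2 {X Y : B.Obj} {f f' g g' : B.Hom X Y} (hf : f = f') (hg : g = g')
    (φ : B.Two f g) : B.Two f' g' :=
  match hf, hg with
  | rfl, rfl => φ

def IsInvertible2 {X Y : B.Obj} {f g : B.Hom X Y} (φ : B.Two f g) : Prop :=
  ∃ ψ : B.Two g f, B.vcomp2 φ ψ = B.id2 f ∧ B.vcomp2 ψ φ = B.id2 g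

def IsIdentity2 {X Y : B.Obj} {f g : B.Hom X Y} (φ : B.Two f g) : Prop :=
  ∃ _ : f = g, HEq φ (B.id2 f)

end TwoCat

/-- A pseudofunctor `(F, ι, χ)` between 2-categories. -/
structure TwoPseudoFunctor (A : TwoCat.{u}) (B : TwoCat.{v}) : Type (max u v) where
  obj : A.Obj → B.Obj
  map1 : ∀ {X Y : A.Obj}, A.Hom X Y → B.Hom (obj X) (obj Y)
  map2 : ∀ {X Y : A.Obj} {f g : A.Hom X Y}, A.Two f g → B.Two (map1 f) (map1 g)
  map2_id : ∀ {X Y : A.Obj} (f : A.Hom X Y), map2 (A.id2 f) = B.id2 (map1 f)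
  map2_vcomp : ∀ {X Y : A.Obj} {f g h : A.Hom X Y} (φ : A.Two f g) (ψ : A.Two g h),
      map2 (A.vcomp2 φ ψ) = B.vcomp2 (map2 φ) (map2 ψ)
  /-- the unitor `ι_X : 1_{FX} ⇒ F(1_X)` -/
  unitor : ∀ X : A.Obj, B.Two (B.id1 (obj X)) (map1 (A.id1 X))
  unitor_inv : ∀ X : A.Obj, B.IsInvertible2 (unitor X)
  /-- the compositor `χ_{g,f} : Ff ⋆ Fg ⇒ F(f ⋆ g)` -/
  comp2 : ∀ {X Y Z : A.Obj} (f : A.Hom X Y) (g : A.Hom Y Z),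
      B.Two (B.comp1 (map1 f) (map1 g)) (map1 (A.comp1 f g))
  comp2_inv : ∀ {X Y Z : A.Obj} (f : A.Hom X Y) (g : A.Hom Y Z), B.IsInvertible2 (comp2 f g)
  comp2_natR : ∀ {X Y Z : A.Obj} {f f' : A.Hom X Y} (φ : A.Two f f') (g : A.Hom Y Z),
      B.vcomp2 (B.whiskR (map2 φ) (map1 g)) (comp2 f' g)
        = B.vcomp2 (comp2 f g) (map2 (A.whiskR φ g))
  comp2_natL : ∀ {X Y Z : A.Obj} (f : A.Hom X Y) {g g' : A.Hom Y Z} (φ : A.Two g g'),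
      B.vcomp2 (B.whiskL (map1 f) (map2 φ)) (comp2 f g')
        = B.vcomp2 (comp2 f g) (map2 (A.whiskL f φ))
  unit_law_l : ∀ {X Y : A.Obj} (f : A.Hom X Y),
      B.vcomp2 (B.whiskR (unitor X) (map1 f)) (comp2 (A.id1 X) f)
        = B.cast2 (B.id_comp1 (map1 f)).symm (by rw [A.id_comp1]) (B.id2 (map1 f))
  unit_law_r : ∀ {X Y : A.Obj} (f : A.Hom X Y),
      B.vcomp2 (B.whiskL (map1 f) (unitor Y)) (comp2 f (A.id1 Y))
        = B.cast2 (B.comp1_id (map1 f)).symm (by rw [A.comp1_id]) (B.id2 (map1 f))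
  assoc_law : ∀ {W X Y Z : A.Obj} (f : A.Hom W X) (g : A.Hom X Y) (h : A.Hom Y Z),
      B.vcomp2 (B.whiskR (comp2 f g) (map1 h)) (comp2 (A.comp1 f g) h)
        = B.cast2 (B.comp1_assoc (map1 f) (map1 g) (map1 h)).symm (by rw [A.comp1_assoc])
            (B.vcomp2 (B.whiskL (map1 f) (comp2 g h)) (comp2 f (A.comp1 g h)))

/-- A strict 2-functor between 2-categories. -/
structure TwoFunctor (A : TwoCat.{u}) (B : TwoCat.{v}) : Type (max u v) where
  obj : A.Obj → B.Obj
  map1 : ∀ {X Y : A.Obj}, A.Hom X Y → B.Hom (obj X) (obj Y)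
  map2 : ∀ {X Y : A.Obj} {f g : A.Hom X Y}, A.Two f g → B.Two (map1 f) (map1 g)
  map1_id : ∀ X : A.Obj, map1 (A.id1 X) = B.id1 (obj X)
  map1_comp : ∀ {X Y Z : A.Obj} (f : A.Hom X Y) (g : A.Hom Y Z),
      map1 (A.comp1 f g) = B.comp1 (map1 f) (map1 g)
  map2_id : ∀ {X Y : A.Obj} (f : A.Hom X Y), map2 (A.id2 f) = B.id2 (map1 f)
  map2_vcomp : ∀ {X Y : A.Obj} {f g h : A.Hom X Y} (φ : A.Two f g) (ψ : A.Two g h),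
      map2 (A.vcomp2 φ ψ) = B.vcomp2 (map2 φ) (map2 ψ)
  map2_whiskL : ∀ {X Y Z : A.Obj} (f : A.Hom X Y) {g h : A.Hom Y Z} (φ : A.Two g h),
      HEq (map2 (A.whiskL f φ)) (B.whiskL (map1 f) (map2 φ))
  map2_whiskR : ∀ {X Y Z : A.Obj} {f g : A.Hom X Y} (φ : A.Two f g) (h : A.Hom Y Z),
      HEq (map2 (A.whiskR φ h)) (B.whiskR (map2 φ) (map1 h))

/-- Paths in a graph. -/
inductive GPath {V : Type u} (E : V → V → Type u) : V → V → Type u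
  | nil (X : V) : GPath E X X
  | cons {X Y Z : V} (ρ : GPath E X Y) (e : E Y Z) : GPath E X Z

/-- Evaluation of a path of generating morphisms in a 2-category. -/
def evalP (A : TwoCat.{u}) {E : A.Obj → A.Obj → Type u}
    (gen : ∀ {X Y : A.Obj}, E X Y → A.Hom X Y) :
    ∀ {X Y : A.Obj}, GPath E X Y → A.Hom X Y
  | _, _, .nil X => A.id1 X
  | _, _, .cons ρ e => A.comp1 (evalP A gen ρ) (gen e)

/-! ### Toolkit: heterogeneous congruence and invertibility lemmas -/

namespace TwoCat

variable {C : TwoCat.{u}}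

theorem heq_cast2 {X Y : C.Obj} {f f' g g' : C.Hom X Y} (hf : f = f') (hg : g = g')
    (φ : C.Two f g) : HEq (C.cast2 hf hg φ) φ := by
  subst hf; subst hg; rfl

theorem hcongr_id1 {X X' : C.Obj} (hX : X = X') : HEq (C.id1 X) (C.id1 X') := by
  subst hX; rfl

theorem hcongr_comp1 {X X' Y Y' Z Z' : C.Obj} (hX : X = X') (hY : Y = Y') (hZ : Z = Z')
    {f : C.Hom X Y} {f' : C.Hom X' Y'} {g : C.Hom Y Z} {g' : C.Hom Y' Z'}
    (hf : HEq f f') (hg : HEq g g') : HEq (C.comp1 f g) (C.comp1 f' g') := by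
  subst hX; subst hY; subst hZ; cases hf; cases hg; rfl

theorem hcongr_id2 {X X' Y Y' : C.Obj} (hX : X = X') (hY : Y = Y')
    {f : C.Hom X Y} {f' : C.Hom X' Y'} (hf : HEq f f') :
    HEq (C.id2 f) (C.id2 f') := by
  subst hX; subst hY; cases hf; rfl

theorem hvcomp {X X' Y Y' : C.Obj} (hX : X = X') (hY : Y = Y')
    {f g h : C.Hom X Y} {f' g' h' : C.Hom X' Y'}
    (hf : HEq f f') (hg : HEq g g') (hh : HEq h h')
    {φ : C.Two f g} {ψ : C.Two g h} {φ' : C.Two f' g'} {ψ' : C.Two g' h'}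
    (h1 : HEq φ φ') (h2 : HEq ψ ψ') : HEq (C.vcomp2 φ ψ) (C.vcomp2 φ' ψ') := by
  subst hX; subst hY; cases hf; cases hg; cases hh; cases h1; cases h2; rfl

theorem hwhiskL {X X' Y Y' Z Z' : C.Obj} (hX : X = X') (hY : Y = Y') (hZ : Z = Z')
    {f : C.Hom X Y} {f' : C.Hom X' Y'} {g h : C.Hom Y Z} {g' h' : C.Hom Y' Z'}
    (hf : HEq f f') (hg : HEq g g') (hh : HEq h h')
    {φ : C.Two g h} {φ' : C.Two g' h'} (h1 : HEq φ φ') :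
    HEq (C.whiskL f φ) (C.whiskL f' φ') := by
  subst hX; subst hY; subst hZ; cases hf; cases hg; cases hh; cases h1; rfl

theorem hwhiskR {X X' Y Y' Z Z' : C.Obj} (hX : X = X') (hY : Y = Y') (hZ : Z = Z')
    {f g : C.Hom X Y} {f' g' : C.Hom X' Y'} {h : C.Hom Y Z} {h' : C.Hom Y' Z'}
    (hf : HEq f f') (hg : HEq g g') (hh : HEq h h')
    {φ : C.Two f g} {φ' : C.Two f' g'} (h1 : HEq φ φ') :
    HEq (C.whiskR φ h) (C.whiskR φ' h') := by
  subst hX; subst hY; subst hZ; cases hf; cases hg; cases hh; cases h1; rfl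

theorem heq_castHom {X X' Y Y' : C.Obj} (hX : X = X') (hY : Y = Y') (f : C.Hom X Y) :
    HEq (C.castHom hX hY f) f := by
  subst hX; subst hY; rfl

/-! invertibility -/

theorem inv_id2 {X Y : C.Obj} (f : C.Hom X Y) : C.IsInvertible2 (C.id2 f) :=
  ⟨C.id2 f, C.id_vcomp2 _, C.id_vcomp2 _⟩

theorem inv_vcomp {X Y : C.Obj} {f g h : C.Hom X Y} {φ : C.Two f g} {ψ : C.Two g h}
    (hφ : C.IsInvertible2 φ) (hψ : C.IsInvertible2 ψ) :
    C.IsInvertible2 (C.vcomp2 φ ψ) := by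
  obtain ⟨φ', hφ1, hφ2⟩ := hφ
  obtain ⟨ψ', hψ1, hψ2⟩ := hψ
  refine ⟨C.vcomp2 ψ' φ', ?_, ?_⟩
  · rw [C.vcomp2_assoc, ← C.vcomp2_assoc ψ, hψ1, C.id_vcomp2, hφ1]
  · rw [C.vcomp2_assoc, ← C.vcomp2_assoc φ', hφ2, C.id_vcomp2, hψ2]

theorem inv_whiskL {X Y Z : C.Obj} (f : C.Hom X Y) {g h : C.Hom Y Z} {φ : C.Two g h}
    (hφ : C.IsInvertible2 φ) : C.IsInvertible2 (C.whiskL f φ) := by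
  obtain ⟨φ', h1, h2⟩ := hφ
  exact ⟨C.whiskL f φ', by rw [← C.whiskL_vcomp2, h1, C.whiskL_id2],
    by rw [← C.whiskL_vcomp2, h2, C.whiskL_id2]⟩

theorem inv_whiskR {X Y Z : C.Obj} {f g : C.Hom X Y} {φ : C.Two f g} (h : C.Hom Y Z)
    (hφ : C.IsInvertible2 φ) : C.IsInvertible2 (C.whiskR φ h) := by
  obtain ⟨φ', h1, h2⟩ := hφ
  exact ⟨C.whiskR φ' h, by rw [← C.whiskR_vcomp2, h1, C.whiskR_id2],
    by rw [← C.whiskR_vcomp2, h2, C.whiskR_id2]⟩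

theorem inv_of_heq {X X' Y Y' : C.Obj} (hX : X = X') (hY : Y = Y')
    {f g : C.Hom X Y} {f' g' : C.Hom X' Y'} (hf : HEq f f') (hg : HEq g g')
    {φ : C.Two f g} {φ' : C.Two f' g'} (h1 : HEq φ φ')
    (hφ : C.IsInvertible2 φ) : C.IsInvertible2 φ' := by
  subst hX; subst hY; cases hf; cases hg; cases h1; exact hφ

theorem inv_unique {X Y : C.Obj} {f g : C.Hom X Y} {φ : C.Two f g} {ψ ψ' : C.Two g f}
    (h1 : C.vcomp2 φ ψ = C.id2 f) (h2 : C.vcomp2 ψ' φ = C.id2 g) : ψ = ψ' := by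
  have : C.vcomp2 ψ' (C.vcomp2 φ ψ) = ψ' := by rw [h1, C.vcomp2_id]
  rw [← C.vcomp2_assoc, h2, C.id_vcomp2] at this
  exact this

theorem cancel_right {X Y : C.Obj} {f g h : C.Hom X Y} {φ ψ : C.Two f g} {τ : C.Two g h}
    (hτ : C.IsInvertible2 τ) (h1 : C.vcomp2 φ τ = C.vcomp2 ψ τ) : φ = ψ := by
  obtain ⟨τ', ht1, _⟩ := hτ
  have h2 : C.vcomp2 (C.vcomp2 φ τ) τ' = C.vcomp2 (C.vcomp2 ψ τ) τ' := by rw [h1]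
  rwa [C.vcomp2_assoc, C.vcomp2_assoc, ht1, C.vcomp2_id, C.vcomp2_id] at h2

theorem cancel_left {X Y : C.Obj} {f g h : C.Hom X Y} {τ : C.Two f g} {φ ψ : C.Two g h}
    (hτ : C.IsInvertible2 τ) (h1 : C.vcomp2 τ φ = C.vcomp2 τ ψ) : φ = ψ := by
  obtain ⟨τ', _, ht2⟩ := hτ
  have h2 : C.vcomp2 τ' (C.vcomp2 τ φ) = C.vcomp2 τ' (C.vcomp2 τ ψ) := by rw [h1]
  rwa [← C.vcomp2_assoc, ← C.vcomp2_assoc, ht2, C.id_vcomp2, C.id_vcomp2] at h2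

theorem hcancel_right {X Y : C.Obj} {a b c a' b' c' : C.Hom X Y}
    (ha : a = a') (hb : b = b') (hc : c = c')
    {φ : C.Two a b} {τ : C.Two b c} {φ' : C.Two a' b'} {τ' : C.Two b' c'}
    (hτ : HEq τ τ') (hinv : C.IsInvertible2 τ)
    (h : HEq (C.vcomp2 φ τ) (C.vcomp2 φ' τ')) : HEq φ φ' := by
  subst ha; subst hb; subst hc; cases hτ
  exact heq_of_eq (C.cancel_right hinv (eq_of_heq h))

theorem hcancel_left {X Y : C.Obj} {a b c a' b' c' : C.Hom X Y}
    (ha : a = a') (hb : b = b') (hc : c = c')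
    {τ : C.Two a b} {φ : C.Two b c} {τ' : C.Two a' b'} {φ' : C.Two b' c'}
    (hτ : HEq τ τ') (hinv : C.IsInvertible2 τ)
    (h : HEq (C.vcomp2 τ φ) (C.vcomp2 τ' φ')) : HEq φ φ' := by
  subst ha; subst hb; subst hc; cases hτ
  exact heq_of_eq (C.cancel_left hinv (eq_of_heq h))

theorem hinv_unique {X Y : C.Obj} {f g f' g' : C.Hom X Y}
    (hf : f = f') (hg : g = g')
    {φ : C.Two f g} {ψ : C.Two g f} {φ' : C.Two f' g'} {ψ' : C.Two g' f'}
    (hφ : HEq φ φ')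
    (h1 : C.vcomp2 φ ψ = C.id2 f) (h2 : C.vcomp2 ψ φ = C.id2 g)
    (h1' : C.vcomp2 φ' ψ' = C.id2 f') (h2' : C.vcomp2 ψ' φ' = C.id2 g') :
    HEq ψ ψ' := by
  subst hf; subst hg; cases hφ
  exact heq_of_eq (C.inv_unique h1 h2')

end TwoCat
/-! ### Path operations -/

namespace GPath

variable {V : Type u} {E : V → V → Type u}

/-- Prepend a generator to a path. -/
noncomputable def fcons {X Y : V} (a : E X Y) {Z : V} (q : GPath E Y Z) : GPath E X Z :=
  GPath.rec (motive := fun (Z : V) (_ : GPath E Y Z) => GPath E X Z)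
    (GPath.cons (.nil X) a)
    (fun _ e ih => GPath.cons ih e) q

@[simp] theorem fcons_nil {X Y : V} (a : E X Y) : fcons a (GPath.nil Y) = .cons (.nil X) a := rfl

@[simp] theorem fcons_cons {X Y Z W : V} (a : E X Y) (q : GPath E Y Z) (b : E Z W) :
    fcons a (GPath.cons q b) = .cons (fcons a q) b := rfl

/-- Concatenation of paths. -/
noncomputable def concat {X Y : V} (p : GPath E X Y) {Z : V} (q : GPath E Y Z) : GPath E X Z :=
  GPath.rec (motive := fun (Z : V) (_ : GPath E Y Z) => GPath E X Z)
    p (fun _ e ih => GPath.cons ih e) q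

@[simp] theorem concat_nil {X Y : V} (p : GPath E X Y) : concat p (GPath.nil Y) = p := rfl

@[simp] theorem concat_cons {X Y Z W : V} (p : GPath E X Y) (q : GPath E Y Z) (b : E Z W) :
    concat p (GPath.cons q b) = .cons (concat p q) b := rfl

/-- Length of a path. -/
noncomputable def glen {X Y : V} (q : GPath E X Y) : ℕ :=
  GPath.rec (motive := fun _ _ => ℕ) 0 (fun _ _ ih => ih + 1) q

@[simp] theorem glen_nil (X : V) : glen (GPath.nil (E := E) X) = 0 := rfl

@[simp] theorem glen_cons {X Y Z : V} (q : GPath E X Y) (b : E Y Z) :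
    glen (GPath.cons q b) = glen q + 1 := rfl

theorem glen_fcons {X Y Z : V} (a : E X Y) (q : GPath E Y Z) :
    glen (fcons a q) = glen q + 1 := by
  induction q with
  | nil => rfl
  | cons q b ih => simp [ih]

theorem decomp {X Y : V} (p : GPath E X Y) :
    (∃ h : X = Y, HEq p (GPath.nil (E := E) X)) ∨
      ∃ (Z : V) (a : E X Z) (q : GPath E Z Y), p = fcons a q := by
  induction p with
  | nil => exact Or.inl ⟨rfl, HEq.rfl⟩
  | cons q b ih =>
    rcases ih with ⟨h, hq⟩ | ⟨Z, a, q', rfl⟩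
    · subst h
      have : q = GPath.nil _ := eq_of_heq hq
      subst this
      exact Or.inr ⟨_, b, .nil _, rfl⟩
    · exact Or.inr ⟨Z, a, .cons q' b, rfl⟩

end GPath

section PathEval

variable {A : TwoCat.{u}} {E : A.Obj → A.Obj → Type u}
variable (gen : ∀ {X Y : A.Obj}, E X Y → A.Hom X Y)

/-- Evaluation of a path (reducible version). -/
noncomputable def evR {X Y : A.Obj} (q : GPath E X Y) : A.Hom X Y :=
  GPath.rec (motive := fun Y _ => A.Hom X Y)
    (A.id1 X) (fun _ b ih => A.comp1 ih (gen b)) q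

@[simp] theorem evR_nil (X : A.Obj) : evR gen (GPath.nil (E := E) X) = A.id1 X := rfl

@[simp] theorem evR_cons {X Y Z : A.Obj} (q : GPath E X Y) (b : E Y Z) :
    evR gen (GPath.cons q b) = A.comp1 (evR gen q) (gen b) := rfl

theorem evR_eq {X Y : A.Obj} (q : GPath E X Y) :
    evR gen q = evalP A (fun {_ _} e => gen e) q := by
  induction q with
  | nil => simp [evalP]
  | cons q b ih => simp [evalP, ih]

theorem evR_fcons {X Y Z : A.Obj} (a : E X Y) (q : GPath E Y Z) :
    evR gen (GPath.fcons a q) = A.comp1 (gen a) (evR gen q) := by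
  induction q with
  | nil => simp only [GPath.fcons_nil, evR_cons, evR_nil]; rw [A.id_comp1, A.comp1_id]
  | cons q b ih => simp only [GPath.fcons_cons, evR_cons, ih]; rw [A.comp1_assoc]

theorem evR_concat {X Y Z : A.Obj} (p : GPath E X Y) (q : GPath E Y Z) :
    evR gen (GPath.concat p q) = A.comp1 (evR gen p) (evR gen q) := by
  induction q with
  | nil => simp only [GPath.concat_nil, evR_nil]; rw [A.comp1_id]
  | cons q b ih => simp only [GPath.concat_cons, evR_cons, ih]; rw [A.comp1_assoc]

end PathEval
/-! ### The strict image of paths and the icon components on paths -/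

section MapR

variable {A : TwoCat.{u}} {B : TwoCat.{v}} {E : A.Obj → A.Obj → Type u}
variable (gen : ∀ {X Y : A.Obj}, E X Y → A.Hom X Y) (F : TwoPseudoFunctor A B)

/-- Strictly-composed image of a path under `F`. -/
noncomputable def mapR {X Y : A.Obj} (q : GPath E X Y) : B.Hom (F.obj X) (F.obj Y) :=
  GPath.rec (motive := fun Y _ => B.Hom (F.obj X) (F.obj Y))
    (B.id1 (F.obj X)) (fun _ b ih => B.comp1 ih (F.map1 (gen b))) q

@[simp] theorem mapR_nil (X : A.Obj) :
    mapR gen F (GPath.nil (E := E) X) = B.id1 (F.obj X) := rfl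

@[simp] theorem mapR_cons {X Y Z : A.Obj} (q : GPath E X Y) (b : E Y Z) :
    mapR gen F (GPath.cons q b) = B.comp1 (mapR gen F q) (F.map1 (gen b)) := rfl

theorem mapR_fcons {X Y Z : A.Obj} (a : E X Y) (q : GPath E Y Z) :
    mapR gen F (GPath.fcons a q) = B.comp1 (F.map1 (gen a)) (mapR gen F q) := by
  induction q with
  | nil => simp only [GPath.fcons_nil, mapR_cons, mapR_nil]; rw [B.id_comp1, B.comp1_id]
  | cons q b ih => simp only [GPath.fcons_cons, mapR_cons, ih]; rw [B.comp1_assoc]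

theorem mapR_concat {X Y Z : A.Obj} (p : GPath E X Y) (q : GPath E Y Z) :
    mapR gen F (GPath.concat p q) = B.comp1 (mapR gen F p) (mapR gen F q) := by
  induction q with
  | nil => simp only [GPath.concat_nil, mapR_nil]; rw [B.comp1_id]
  | cons q b ih => simp only [GPath.concat_cons, mapR_cons, ih]; rw [B.comp1_assoc]

/-- The icon component on a path. -/
noncomputable def eP {X Y : A.Obj} (q : GPath E X Y) :
    B.Two (mapR gen F q) (F.map1 (evR gen q)) :=
  GPath.rec (motive := fun Y q => B.Two (mapR gen F q) (F.map1 (evR gen q)))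
    (F.unitor X)
    (fun {Y Z} q b ih => B.vcomp2 (B.whiskR ih (F.map1 (gen b))) (F.comp2 (evR gen q) (gen b)))
    q

@[simp] theorem eP_nil (X : A.Obj) : eP gen F (GPath.nil (E := E) X) = F.unitor X := rfl

@[simp] theorem eP_cons {X Y Z : A.Obj} (q : GPath E X Y) (b : E Y Z) :
    eP gen F (GPath.cons q b)
      = B.vcomp2 (B.whiskR (eP gen F q) (F.map1 (gen b))) (F.comp2 (evR gen q) (gen b)) := rfl

theorem eP_inv {X Y : A.Obj} (q : GPath E X Y) : B.IsInvertible2 (eP gen F q) := by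
  induction q with
  | nil => exact F.unitor_inv X
  | cons q b ih => exact B.inv_vcomp (B.inv_whiskR _ ih) (F.comp2_inv _ _)

end MapR
/-! ### Coherence: derived middle-interchange laws -/

section Mix

variable {A : TwoCat.{u}} {B : TwoCat.{v}} {E : A.Obj → A.Obj → Type u}
variable (gen : ∀ {X Y : A.Obj}, E X Y → A.Hom X Y) (F : TwoPseudoFunctor A B)

theorem unitL' {X Y : A.Obj} (f : A.Hom X Y) :
    HEq (B.vcomp2 (B.whiskR (F.unitor X) (F.map1 f)) (F.comp2 (A.id1 X) f))
      (B.id2 (F.map1 f)) := by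
  rw [F.unit_law_l]; exact B.heq_cast2 _ _ _

theorem unitR' {X Y : A.Obj} (f : A.Hom X Y) :
    HEq (B.vcomp2 (B.whiskL (F.map1 f) (F.unitor Y)) (F.comp2 f (A.id1 Y)))
      (B.id2 (F.map1 f)) := by
  rw [F.unit_law_r]; exact B.heq_cast2 _ _ _

theorem pent' {W X Y Z : A.Obj} (f : A.Hom W X) (g : A.Hom X Y) (h : A.Hom Y Z) :
    HEq (B.vcomp2 (B.whiskR (F.comp2 f g) (F.map1 h)) (F.comp2 (A.comp1 f g) h))
      (B.vcomp2 (B.whiskL (F.map1 f) (F.comp2 g h)) (F.comp2 f (A.comp1 g h))) := by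
  rw [F.assoc_law]; exact B.heq_cast2 _ _ _

theorem hcomp2 {X Y Z : A.Obj} {f f' : A.Hom X Y} {g g' : A.Hom Y Z}
    (hf : f = f') (hg : g = g') : HEq (F.comp2 f g) (F.comp2 f' g') := by
  subst hf; subst hg; rfl

/-- Middle-interchange property of a fixed `2`-cell with respect to whiskering. -/
abbrev MixUV {O P Q R : B.Obj} (u : B.Hom O P) {s t : B.Hom P Q} (ξ : B.Two s t)
    (v : B.Hom Q R) : Prop :=
  HEq (B.whiskL u (B.whiskR ξ v)) (B.whiskR (B.whiskL u ξ) v)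

theorem mix_id2 {O P Q R : B.Obj} (u : B.Hom O P) (s : B.Hom P Q) (v : B.Hom Q R) :
    MixUV u (B.id2 s) v := by
  unfold MixUV
  rw [B.whiskR_id2, B.whiskL_id2, B.whiskL_id2, B.whiskR_id2]
  exact B.hcongr_id2 rfl rfl (heq_of_eq (B.comp1_assoc u s v).symm)

theorem mix_vcomp {O P Q R : B.Obj} {u : B.Hom O P} {s t w : B.Hom P Q}
    {ξ : B.Two s t} {ζ : B.Two t w} {v : B.Hom Q R}
    (h1 : MixUV u ξ v) (h2 : MixUV u ζ v) : MixUV u (B.vcomp2 ξ ζ) v := by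
  unfold MixUV
  rw [B.whiskR_vcomp2, B.whiskL_vcomp2, B.whiskL_vcomp2, B.whiskR_vcomp2]
  exact B.hvcomp rfl rfl (heq_of_eq (B.comp1_assoc u s v).symm)
    (heq_of_eq (B.comp1_assoc u t v).symm) (heq_of_eq (B.comp1_assoc u w v).symm) h1 h2

theorem mix_congr {O P Q R : B.Obj} {u : B.Hom O P} {s t s' t' : B.Hom P Q}
    {ξ : B.Two s t} {ξ' : B.Two s' t'} {v : B.Hom Q R}
    (hs : s = s') (ht : t = t') (hξ : HEq ξ ξ') (h : MixUV u ξ v) : MixUV u ξ' v := by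
  subst hs; subst ht; cases hξ; exact h

theorem mix_conj_right {O P Q R : B.Obj} (u : B.Hom O P) {s t : B.Hom P Q}
    (β : B.Two s t) {v v' : B.Hom Q R} (γ : B.Two v v') (hγ : B.IsInvertible2 γ)
    (h : MixUV u β v') : MixUV u β v := by
  have L1 : B.vcomp2 (B.whiskL u (B.whiskR β v)) (B.whiskL u (B.whiskL t γ))
      = B.vcomp2 (B.whiskL u (B.whiskL s γ)) (B.whiskL u (B.whiskR β v')) := by
    rw [← B.whiskL_vcomp2, ← B.whiskL_vcomp2, B.interchange β γ]
  have I2 : B.vcomp2 (B.whiskR (B.whiskL u β) v) (B.whiskL (B.comp1 u t) γ)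
      = B.vcomp2 (B.whiskL (B.comp1 u s) γ) (B.whiskR (B.whiskL u β) v') :=
    B.interchange _ γ
  have E1 : HEq (B.vcomp2 (B.whiskL u (B.whiskL s γ)) (B.whiskL u (B.whiskR β v')))
      (B.vcomp2 (B.whiskL (B.comp1 u s) γ) (B.whiskR (B.whiskL u β) v')) :=
    B.hvcomp rfl rfl (heq_of_eq (B.comp1_assoc u s v).symm)
      (heq_of_eq (B.comp1_assoc u s v').symm) (heq_of_eq (B.comp1_assoc u t v').symm)
      (B.whiskL_comp1 u s γ).symm h
  have chain : HEq (B.vcomp2 (B.whiskL u (B.whiskR β v)) (B.whiskL u (B.whiskL t γ)))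
      (B.vcomp2 (B.whiskR (B.whiskL u β) v) (B.whiskL (B.comp1 u t) γ)) :=
    (heq_of_eq L1).trans (E1.trans (heq_of_eq I2.symm))
  exact B.hcancel_right (B.comp1_assoc u s v).symm (B.comp1_assoc u t v).symm
    (B.comp1_assoc u t v').symm (B.whiskL_comp1 u t γ).symm
    (B.inv_whiskL _ (B.inv_whiskL _ hγ)) chain

theorem mix_shift {O P Q R S : B.Obj} {u : B.Hom O P} {s t : B.Hom P Q}
    {β : B.Two s t} {w : B.Hom Q R} {v : B.Hom R S}
    (h1 : MixUV u β (B.comp1 w v)) (h2 : MixUV u β w) : MixUV u (B.whiskR β w) v := by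
  unfold MixUV
  have s1 : HEq (B.whiskL u (B.whiskR (B.whiskR β w) v))
      (B.whiskL u (B.whiskR β (B.comp1 w v))) :=
    B.hwhiskL rfl rfl rfl (HEq.refl u)
      (heq_of_eq (B.comp1_assoc s w v)) (heq_of_eq (B.comp1_assoc t w v))
      (B.whiskR_comp1 β w v).symm
  have s2 : HEq (B.whiskR (B.whiskL u β) (B.comp1 w v))
      (B.whiskR (B.whiskR (B.whiskL u β) w) v) := B.whiskR_comp1 _ w v
  have s3 : HEq (B.whiskR (B.whiskR (B.whiskL u β) w) v)
      (B.whiskR (B.whiskL u (B.whiskR β w)) v) :=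
    B.hwhiskR rfl rfl rfl
      (heq_of_eq (B.comp1_assoc u s w))
      (heq_of_eq (B.comp1_assoc u t w)) (HEq.refl v) h2.symm
  exact ((s1.trans h1).trans s2).trans s3

end Mix
section MixChi

variable {A : TwoCat.{u}} {B : TwoCat.{v}} {E : A.Obj → A.Obj → Type u}
variable (gen : ∀ {X Y : A.Obj}, E X Y → A.Hom X Y) (F : TwoPseudoFunctor A B)

theorem mix_chi {V W X Y Z : A.Obj} (f : A.Hom V W) (g : A.Hom W X) (h : A.Hom X Y)
    (k : A.Hom Y Z) : MixUV (F.map1 f) (F.comp2 g h) (F.map1 k) := by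
  -- the two heads
  set H1 := B.whiskL (F.map1 f) (B.whiskR (F.comp2 g h) (F.map1 k)) with hH1
  set H2 := B.whiskR (B.whiskL (F.map1 f) (F.comp2 g h)) (F.map1 k) with hH2
  -- the two (pentagon-related) invertible tails
  set T1 := B.vcomp2 (B.whiskL (F.map1 f) (F.comp2 (A.comp1 g h) k))
      (F.comp2 f (A.comp1 (A.comp1 g h) k)) with hT1
  set T2 := B.vcomp2 (B.whiskR (F.comp2 f (A.comp1 g h)) (F.map1 k))
      (F.comp2 (A.comp1 f (A.comp1 g h)) k) with hT2
  have hT : HEq T2 T1 := pent' F f (A.comp1 g h) k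
  -- the telescoping chain
  have e1 : B.vcomp2 H1 T1
      = B.vcomp2 (B.whiskL (F.map1 f)
          (B.vcomp2 (B.whiskR (F.comp2 g h) (F.map1 k)) (F.comp2 (A.comp1 g h) k)))
        (F.comp2 f (A.comp1 (A.comp1 g h) k)) := by
    rw [hH1, hT1, ← B.vcomp2_assoc, ← B.whiskL_vcomp2]
  have e2 : HEq (B.vcomp2 (B.whiskL (F.map1 f)
          (B.vcomp2 (B.whiskR (F.comp2 g h) (F.map1 k)) (F.comp2 (A.comp1 g h) k)))
        (F.comp2 f (A.comp1 (A.comp1 g h) k)))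
      (B.vcomp2 (B.whiskL (F.map1 f)
          (B.vcomp2 (B.whiskL (F.map1 g) (F.comp2 h k)) (F.comp2 g (A.comp1 h k))))
        (F.comp2 f (A.comp1 g (A.comp1 h k)))) := by
    refine B.hvcomp rfl rfl
      (heq_of_eq (congrArg (B.comp1 (F.map1 f)) (B.comp1_assoc _ _ _)))
      (heq_of_eq (congrArg (fun z => B.comp1 (F.map1 f) (F.map1 z)) (A.comp1_assoc g h k)))
      (heq_of_eq (congrArg (fun z => F.map1 (A.comp1 f z)) (A.comp1_assoc g h k)))
      (B.hwhiskL rfl rfl rfl HEq.rfl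
        (heq_of_eq (B.comp1_assoc _ _ _))
        (heq_of_eq (congrArg F.map1 (A.comp1_assoc g h k)))
        (pent' F g h k))
      (hcomp2 F rfl (A.comp1_assoc g h k))
  have e3 : B.vcomp2 (B.whiskL (F.map1 f)
          (B.vcomp2 (B.whiskL (F.map1 g) (F.comp2 h k)) (F.comp2 g (A.comp1 h k))))
        (F.comp2 f (A.comp1 g (A.comp1 h k)))
      = B.vcomp2 (B.whiskL (F.map1 f) (B.whiskL (F.map1 g) (F.comp2 h k)))
        (B.vcomp2 (B.whiskL (F.map1 f) (F.comp2 g (A.comp1 h k)))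
          (F.comp2 f (A.comp1 g (A.comp1 h k)))) := by
    rw [B.whiskL_vcomp2, B.vcomp2_assoc]
  have e4 : HEq (B.vcomp2 (B.whiskL (F.map1 f) (B.whiskL (F.map1 g) (F.comp2 h k)))
        (B.vcomp2 (B.whiskL (F.map1 f) (F.comp2 g (A.comp1 h k)))
          (F.comp2 f (A.comp1 g (A.comp1 h k)))))
      (B.vcomp2 (B.whiskL (B.comp1 (F.map1 f) (F.map1 g)) (F.comp2 h k))
        (B.vcomp2 (B.whiskR (F.comp2 f g) (F.map1 (A.comp1 h k)))
          (F.comp2 (A.comp1 f g) (A.comp1 h k)))) := by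
    refine B.hvcomp rfl rfl
      (heq_of_eq (B.comp1_assoc _ _ _).symm)
      (heq_of_eq (B.comp1_assoc _ _ _).symm)
      (heq_of_eq (congrArg F.map1 (A.comp1_assoc f g (A.comp1 h k)).symm))
      (B.whiskL_comp1 (F.map1 f) (F.map1 g) (F.comp2 h k)).symm
      (pent' F f g (A.comp1 h k)).symm
  have e5 : B.vcomp2 (B.whiskL (B.comp1 (F.map1 f) (F.map1 g)) (F.comp2 h k))
        (B.vcomp2 (B.whiskR (F.comp2 f g) (F.map1 (A.comp1 h k)))
          (F.comp2 (A.comp1 f g) (A.comp1 h k)))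
      = B.vcomp2 (B.whiskR (F.comp2 f g) (B.comp1 (F.map1 h) (F.map1 k)))
        (B.vcomp2 (B.whiskL (F.map1 (A.comp1 f g)) (F.comp2 h k))
          (F.comp2 (A.comp1 f g) (A.comp1 h k))) := by
    rw [← B.vcomp2_assoc, ← B.interchange (F.comp2 f g) (F.comp2 h k), B.vcomp2_assoc]
  have e6 : HEq (B.vcomp2 (B.whiskR (F.comp2 f g) (B.comp1 (F.map1 h) (F.map1 k)))
        (B.vcomp2 (B.whiskL (F.map1 (A.comp1 f g)) (F.comp2 h k))
          (F.comp2 (A.comp1 f g) (A.comp1 h k))))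
      (B.vcomp2 (B.whiskR (B.whiskR (F.comp2 f g) (F.map1 h)) (F.map1 k))
        (B.vcomp2 (B.whiskR (F.comp2 (A.comp1 f g) h) (F.map1 k))
          (F.comp2 (A.comp1 (A.comp1 f g) h) k))) := by
    refine B.hvcomp rfl rfl
      (heq_of_eq (B.comp1_assoc _ _ _).symm)
      (heq_of_eq (B.comp1_assoc _ _ _).symm)
      (heq_of_eq (congrArg F.map1 (A.comp1_assoc (A.comp1 f g) h k).symm))
      (B.whiskR_comp1 (F.comp2 f g) (F.map1 h) (F.map1 k))
      (pent' F (A.comp1 f g) h k).symm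
  have e7 : B.vcomp2 (B.whiskR (B.whiskR (F.comp2 f g) (F.map1 h)) (F.map1 k))
        (B.vcomp2 (B.whiskR (F.comp2 (A.comp1 f g) h) (F.map1 k))
          (F.comp2 (A.comp1 (A.comp1 f g) h) k))
      = B.vcomp2 (B.whiskR
            (B.vcomp2 (B.whiskR (F.comp2 f g) (F.map1 h)) (F.comp2 (A.comp1 f g) h))
            (F.map1 k))
          (F.comp2 (A.comp1 (A.comp1 f g) h) k) := by
    rw [← B.vcomp2_assoc, ← B.whiskR_vcomp2]
  have e8 : HEq (B.vcomp2 (B.whiskR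
            (B.vcomp2 (B.whiskR (F.comp2 f g) (F.map1 h)) (F.comp2 (A.comp1 f g) h))
            (F.map1 k))
          (F.comp2 (A.comp1 (A.comp1 f g) h) k))
      (B.vcomp2 (B.whiskR
            (B.vcomp2 (B.whiskL (F.map1 f) (F.comp2 g h)) (F.comp2 f (A.comp1 g h)))
            (F.map1 k))
          (F.comp2 (A.comp1 f (A.comp1 g h)) k)) := by
    refine B.hvcomp rfl rfl
      (heq_of_eq (congrArg (fun z => B.comp1 z (F.map1 k)) (B.comp1_assoc _ _ _)))
      (heq_of_eq (congrArg (fun z => B.comp1 (F.map1 z) (F.map1 k)) (A.comp1_assoc f g h)))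
      (heq_of_eq (congrArg (fun z => F.map1 (A.comp1 z k)) (A.comp1_assoc f g h)))
      (B.hwhiskR rfl rfl rfl
        (heq_of_eq (B.comp1_assoc _ _ _))
        (heq_of_eq (congrArg F.map1 (A.comp1_assoc f g h)))
        HEq.rfl
        (pent' F f g h))
      (hcomp2 F (A.comp1_assoc f g h) rfl)
  have e9 : B.vcomp2 (B.whiskR
            (B.vcomp2 (B.whiskL (F.map1 f) (F.comp2 g h)) (F.comp2 f (A.comp1 g h)))
            (F.map1 k))
          (F.comp2 (A.comp1 f (A.comp1 g h)) k)
      = B.vcomp2 H2 T2 := by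
    rw [hH2, hT2, B.whiskR_vcomp2, B.vcomp2_assoc]
  have chain : HEq (B.vcomp2 H1 T1) (B.vcomp2 H2 T2) :=
    (((((heq_of_eq e1).trans e2).trans (heq_of_eq e3)).trans e4).trans
      (((heq_of_eq e5).trans e6).trans (heq_of_eq e7))).trans
      (e8.trans (heq_of_eq e9))
  exact B.hcancel_right (B.comp1_assoc _ _ _).symm (B.comp1_assoc _ _ _).symm
    (congrArg F.map1 (A.comp1_assoc f (A.comp1 g h) k).symm) hT.symm
    (B.inv_vcomp (B.inv_whiskL _ (F.comp2_inv _ _)) (F.comp2_inv _ _)) chain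

end MixChi
section FrontRule

variable {A : TwoCat.{u}} {B : TwoCat.{v}} {E : A.Obj → A.Obj → Type u}
variable (gen : ∀ {X Y : A.Obj}, E X Y → A.Hom X Y) (F : TwoPseudoFunctor A B)

theorem mix_eP {X Y : A.Obj} (q : GPath E X Y) :
    ∀ {O R : A.Obj} (f : A.Hom O X) (k : A.Hom Y R),
      MixUV (F.map1 f) (eP gen F q) (F.map1 k) := by
  induction q with
  | nil =>
    intro O R f k
    -- cancellation against the pentagon tails, using both unit laws
    have cL : B.vcomp2 (B.whiskL (F.map1 f) (B.whiskR (F.unitor X) (F.map1 k)))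
          (B.vcomp2 (B.whiskL (F.map1 f) (F.comp2 (A.id1 X) k))
            (F.comp2 f (A.comp1 (A.id1 X) k)))
        = B.vcomp2 (B.whiskL (F.map1 f)
            (B.vcomp2 (B.whiskR (F.unitor X) (F.map1 k)) (F.comp2 (A.id1 X) k)))
          (F.comp2 f (A.comp1 (A.id1 X) k)) := by
      rw [← B.vcomp2_assoc, ← B.whiskL_vcomp2]
    have hL : HEq (B.vcomp2 (B.whiskL (F.map1 f)
            (B.vcomp2 (B.whiskR (F.unitor X) (F.map1 k)) (F.comp2 (A.id1 X) k)))
          (F.comp2 f (A.comp1 (A.id1 X) k)))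
        (F.comp2 f k) := by
      have step : HEq (B.vcomp2 (B.whiskL (F.map1 f)
            (B.vcomp2 (B.whiskR (F.unitor X) (F.map1 k)) (F.comp2 (A.id1 X) k)))
          (F.comp2 f (A.comp1 (A.id1 X) k)))
          (B.vcomp2 (B.whiskL (F.map1 f) (B.id2 (F.map1 k))) (F.comp2 f k)) :=
        B.hvcomp rfl rfl
          (heq_of_eq (congrArg (B.comp1 (F.map1 f)) (B.id_comp1 (F.map1 k))))
          (heq_of_eq (congrArg (fun z => B.comp1 (F.map1 f) (F.map1 z)) (A.id_comp1 k)))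
          (heq_of_eq (congrArg (fun z => F.map1 (A.comp1 f z)) (A.id_comp1 k)))
          (B.hwhiskL rfl rfl rfl HEq.rfl
            (heq_of_eq (B.id_comp1 (F.map1 k)))
            (heq_of_eq (congrArg F.map1 (A.id_comp1 k)))
            (unitL' F k))
          (hcomp2 F rfl (A.id_comp1 k))
      refine step.trans (heq_of_eq ?_)
      rw [B.whiskL_id2, B.id_vcomp2]
    have cR : B.vcomp2 (B.whiskR (B.whiskL (F.map1 f) (F.unitor X)) (F.map1 k))
          (B.vcomp2 (B.whiskR (F.comp2 f (A.id1 X)) (F.map1 k))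
            (F.comp2 (A.comp1 f (A.id1 X)) k))
        = B.vcomp2 (B.whiskR
            (B.vcomp2 (B.whiskL (F.map1 f) (F.unitor X)) (F.comp2 f (A.id1 X)))
            (F.map1 k))
          (F.comp2 (A.comp1 f (A.id1 X)) k) := by
      rw [← B.vcomp2_assoc, ← B.whiskR_vcomp2]
    have hR : HEq (B.vcomp2 (B.whiskR
            (B.vcomp2 (B.whiskL (F.map1 f) (F.unitor X)) (F.comp2 f (A.id1 X)))
            (F.map1 k))
          (F.comp2 (A.comp1 f (A.id1 X)) k))
        (F.comp2 f k) := by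
      have step : HEq (B.vcomp2 (B.whiskR
            (B.vcomp2 (B.whiskL (F.map1 f) (F.unitor X)) (F.comp2 f (A.id1 X)))
            (F.map1 k))
          (F.comp2 (A.comp1 f (A.id1 X)) k))
          (B.vcomp2 (B.whiskR (B.id2 (F.map1 f)) (F.map1 k)) (F.comp2 f k)) :=
        B.hvcomp rfl rfl
          (heq_of_eq (congrArg (fun z => B.comp1 z (F.map1 k)) (B.comp1_id (F.map1 f))))
          (heq_of_eq (congrArg (fun z => B.comp1 (F.map1 z) (F.map1 k)) (A.comp1_id f)))
          (heq_of_eq (congrArg (fun z => F.map1 (A.comp1 z k)) (A.comp1_id f)))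
          (B.hwhiskR rfl rfl rfl
            (heq_of_eq (B.comp1_id (F.map1 f)))
            (heq_of_eq (congrArg F.map1 (A.comp1_id f)))
            HEq.rfl
            (unitR' F f))
          (hcomp2 F (A.comp1_id f) rfl)
      refine step.trans (heq_of_eq ?_)
      rw [B.whiskR_id2, B.id_vcomp2]
    have hT : HEq (B.vcomp2 (B.whiskR (F.comp2 f (A.id1 X)) (F.map1 k))
            (F.comp2 (A.comp1 f (A.id1 X)) k))
        (B.vcomp2 (B.whiskL (F.map1 f) (F.comp2 (A.id1 X) k))
            (F.comp2 f (A.comp1 (A.id1 X) k))) := pent' F f (A.id1 X) k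
    have chain : HEq
        (B.vcomp2 (B.whiskL (F.map1 f) (B.whiskR (F.unitor X) (F.map1 k)))
          (B.vcomp2 (B.whiskL (F.map1 f) (F.comp2 (A.id1 X) k))
            (F.comp2 f (A.comp1 (A.id1 X) k))))
        (B.vcomp2 (B.whiskR (B.whiskL (F.map1 f) (F.unitor X)) (F.map1 k))
          (B.vcomp2 (B.whiskR (F.comp2 f (A.id1 X)) (F.map1 k))
            (F.comp2 (A.comp1 f (A.id1 X)) k))) :=
      ((heq_of_eq cL).trans (hL.trans (hR.symm.trans (heq_of_eq cR.symm))))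
    exact B.hcancel_right
      (B.comp1_assoc _ _ _).symm (B.comp1_assoc _ _ _).symm
      (congrArg F.map1 (A.comp1_assoc f (A.id1 X) k).symm) hT.symm
      (B.inv_vcomp (B.inv_whiskL _ (F.comp2_inv _ _)) (F.comp2_inv _ _)) chain
  | cons q' b ih =>
    intro O R f k
    refine mix_vcomp ?_ ?_
    · exact mix_shift
        (mix_conj_right _ _ (F.comp2 (gen b) k) (F.comp2_inv _ _)
          (mix_congr rfl rfl HEq.rfl (ih f (A.comp1 (gen b) k))))
        (ih f (gen b))
    · exact mix_chi F f (evR gen q') (gen b) k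

theorem eP_fcons {X Y Z : A.Obj} (a : E X Y) (q : GPath E Y Z) :
    HEq (eP gen F (GPath.fcons a q))
      (B.vcomp2 (B.whiskL (F.map1 (gen a)) (eP gen F q)) (F.comp2 (gen a) (evR gen q))) := by
  induction q with
  | nil =>
    rw [GPath.fcons_nil]
    exact (unitL' F (gen a)).trans (unitR' F (gen a)).symm
  | cons q' b ih =>
    rw [GPath.fcons_cons]
    set r := evR gen q' with hr
    have s1 : HEq (B.vcomp2 (B.whiskR (eP gen F (GPath.fcons a q')) (F.map1 (gen b)))
            (F.comp2 (evR gen (GPath.fcons a q')) (gen b)))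
        (B.vcomp2 (B.whiskR
            (B.vcomp2 (B.whiskL (F.map1 (gen a)) (eP gen F q')) (F.comp2 (gen a) r))
            (F.map1 (gen b)))
          (F.comp2 (A.comp1 (gen a) r) (gen b))) :=
      B.hvcomp rfl rfl
        (heq_of_eq (congrArg (fun z => B.comp1 z (F.map1 (gen b))) (mapR_fcons gen F a q')))
        (heq_of_eq (congrArg (fun z => B.comp1 (F.map1 z) (F.map1 (gen b))) (evR_fcons gen a q')))
        (heq_of_eq (congrArg (fun z => F.map1 (A.comp1 z (gen b))) (evR_fcons gen a q')))
        (B.hwhiskR rfl rfl rfl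
          (heq_of_eq (mapR_fcons gen F a q'))
          (heq_of_eq (congrArg F.map1 (evR_fcons gen a q')))
          HEq.rfl ih)
        (hcomp2 F (evR_fcons gen a q') rfl)
    have s2 : B.vcomp2 (B.whiskR
            (B.vcomp2 (B.whiskL (F.map1 (gen a)) (eP gen F q')) (F.comp2 (gen a) r))
            (F.map1 (gen b)))
          (F.comp2 (A.comp1 (gen a) r) (gen b))
        = B.vcomp2 (B.whiskR (B.whiskL (F.map1 (gen a)) (eP gen F q')) (F.map1 (gen b)))
            (B.vcomp2 (B.whiskR (F.comp2 (gen a) r) (F.map1 (gen b)))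
              (F.comp2 (A.comp1 (gen a) r) (gen b))) := by
      rw [B.whiskR_vcomp2, B.vcomp2_assoc]
    have s3 : HEq (B.vcomp2 (B.whiskR (B.whiskL (F.map1 (gen a)) (eP gen F q')) (F.map1 (gen b)))
            (B.vcomp2 (B.whiskR (F.comp2 (gen a) r) (F.map1 (gen b)))
              (F.comp2 (A.comp1 (gen a) r) (gen b))))
        (B.vcomp2 (B.whiskL (F.map1 (gen a)) (B.whiskR (eP gen F q') (F.map1 (gen b))))
            (B.vcomp2 (B.whiskL (F.map1 (gen a)) (F.comp2 r (gen b)))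
              (F.comp2 (gen a) (A.comp1 r (gen b))))) :=
      B.hvcomp rfl rfl
        (heq_of_eq (B.comp1_assoc _ _ _))
        (heq_of_eq (B.comp1_assoc _ _ _))
        (heq_of_eq (congrArg F.map1 (A.comp1_assoc (gen a) r (gen b))))
        (mix_eP gen F q' (gen a) (gen b)).symm
        (pent' F (gen a) r (gen b))
    have s4 : B.vcomp2 (B.whiskL (F.map1 (gen a)) (B.whiskR (eP gen F q') (F.map1 (gen b))))
            (B.vcomp2 (B.whiskL (F.map1 (gen a)) (F.comp2 r (gen b)))
              (F.comp2 (gen a) (A.comp1 r (gen b))))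
        = B.vcomp2 (B.whiskL (F.map1 (gen a)) (eP gen F (GPath.cons q' b)))
            (F.comp2 (gen a) (evR gen (GPath.cons q' b))) := by
      rw [← B.vcomp2_assoc, ← B.whiskL_vcomp2]
      rfl
    exact ((s1.trans (heq_of_eq s2)).trans s3).trans (heq_of_eq s4)

end FrontRule
section Fbar

variable {A : TwoCat.{u}} {B : TwoCat.{v}} {E : A.Obj → A.Obj → Type u}
variable (gen : ∀ {X Y : A.Obj}, E X Y → A.Hom X Y) (F : TwoPseudoFunctor A B)
variable (hfree : ∀ X Y : A.Obj,
      Function.Bijective (fun ρ : GPath E X Y => evalP A (fun {_ _} e => gen e) ρ))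

/-- The inverse of path evaluation. -/
noncomputable def pathOf {X Y : A.Obj} (f : A.Hom X Y) : GPath E X Y :=
  (Equiv.ofBijective _ (hfree X Y)).symm f

theorem ev_pathOf {X Y : A.Obj} (f : A.Hom X Y) : evR gen (pathOf gen hfree f) = f := by
  rw [evR_eq]
  exact (Equiv.ofBijective _ (hfree X Y)).apply_symm_apply f

theorem pathOf_unique {X Y : A.Obj} {q : GPath E X Y} {f : A.Hom X Y}
    (h : evR gen q = f) : pathOf gen hfree f = q := by
  subst h
  rw [evR_eq]
  exact (Equiv.ofBijective _ (hfree X Y)).symm_apply_apply q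

theorem pathOf_ev {X Y : A.Obj} (q : GPath E X Y) : pathOf gen hfree (evR gen q) = q :=
  pathOf_unique gen hfree rfl

theorem pathOf_id (X : A.Obj) : pathOf gen hfree (A.id1 X) = GPath.nil X :=
  pathOf_unique gen hfree (evR_nil gen X)

theorem pathOf_comp {X Y Z : A.Obj} (f : A.Hom X Y) (g : A.Hom Y Z) :
    pathOf gen hfree (A.comp1 f g)
      = GPath.concat (pathOf gen hfree f) (pathOf gen hfree g) :=
  pathOf_unique gen hfree
    (by rw [evR_concat, ev_pathOf gen hfree, ev_pathOf gen hfree])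

theorem pathOf_cons {X Y Z : A.Obj} (f : A.Hom X Y) (b : E Y Z) :
    pathOf gen hfree (A.comp1 f (gen b)) = GPath.cons (pathOf gen hfree f) b :=
  pathOf_unique gen hfree (by rw [evR_cons, ev_pathOf gen hfree])

theorem pathOf_fcons {X Y Z : A.Obj} (a : E X Y) (h : A.Hom Y Z) :
    pathOf gen hfree (A.comp1 (gen a) h) = GPath.fcons a (pathOf gen hfree h) :=
  pathOf_unique gen hfree (by rw [evR_fcons, ev_pathOf gen hfree])

theorem pathOf_gen {X Y : A.Obj} (b : E X Y) :
    pathOf gen hfree (gen b) = GPath.cons (GPath.nil X) b :=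
  pathOf_unique gen hfree (by rw [evR_cons, evR_nil, A.id_comp1])

/-- The `1`-cell part of the strictification. -/
noncomputable def map1b {X Y : A.Obj} (f : A.Hom X Y) : B.Hom (F.obj X) (F.obj Y) :=
  mapR gen F (pathOf gen hfree f)

/-- The icon component. -/
noncomputable def e0 {X Y : A.Obj} (f : A.Hom X Y) :
    B.Two (map1b gen F hfree f) (F.map1 f) :=
  B.cast2 rfl (congrArg F.map1 (ev_pathOf gen hfree f)) (eP gen F (pathOf gen hfree f))

theorem e0_heq {X Y : A.Obj} (f : A.Hom X Y) :
    HEq (e0 gen F hfree f) (eP gen F (pathOf gen hfree f)) :=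
  B.heq_cast2 _ _ _

theorem e0_invertible {X Y : A.Obj} (f : A.Hom X Y) :
    B.IsInvertible2 (e0 gen F hfree f) :=
  B.inv_of_heq rfl rfl HEq.rfl (heq_of_eq (congrArg F.map1 (ev_pathOf gen hfree f)))
    (e0_heq gen F hfree f).symm (eP_inv gen F _)

/-- The inverse icon component. -/
noncomputable def e0inv {X Y : A.Obj} (f : A.Hom X Y) :
    B.Two (F.map1 f) (map1b gen F hfree f) :=
  (e0_invertible gen F hfree f).choose

theorem e0_vcomp_e0inv {X Y : A.Obj} (f : A.Hom X Y) :
    B.vcomp2 (e0 gen F hfree f) (e0inv gen F hfree f) = B.id2 (map1b gen F hfree f) :=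
  (e0_invertible gen F hfree f).choose_spec.1

theorem e0inv_vcomp_e0 {X Y : A.Obj} (f : A.Hom X Y) :
    B.vcomp2 (e0inv gen F hfree f) (e0 gen F hfree f) = B.id2 (F.map1 f) :=
  (e0_invertible gen F hfree f).choose_spec.2

theorem e0_id (X : A.Obj) : HEq (e0 gen F hfree (A.id1 X)) (F.unitor X) := by
  refine (e0_heq gen F hfree _).trans ?_
  rw [pathOf_id gen hfree X]
  exact HEq.rfl

theorem map1b_fcons {X Y Z : A.Obj} (a : E X Y) (h : A.Hom Y Z) :
    map1b gen F hfree (A.comp1 (gen a) h)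
      = B.comp1 (F.map1 (gen a)) (map1b gen F hfree h) := by
  unfold map1b
  rw [pathOf_fcons gen hfree, mapR_fcons]

theorem map1b_cons {X Y Z : A.Obj} (f : A.Hom X Y) (b : E Y Z) :
    map1b gen F hfree (A.comp1 f (gen b))
      = B.comp1 (map1b gen F hfree f) (F.map1 (gen b)) := by
  unfold map1b
  rw [pathOf_cons gen hfree, mapR_cons]

theorem e0_fcons {X Y Z : A.Obj} (a : E X Y) (h : A.Hom Y Z) :
    HEq (e0 gen F hfree (A.comp1 (gen a) h))
      (B.vcomp2 (B.whiskL (F.map1 (gen a)) (e0 gen F hfree h)) (F.comp2 (gen a) h)) := by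
  refine ((e0_heq gen F hfree _).trans ?_)
  rw [pathOf_fcons gen hfree]
  refine (eP_fcons gen F a (pathOf gen hfree h)).trans ?_
  exact B.hvcomp rfl rfl
    rfl.heq
    (heq_of_eq (congrArg (fun z => B.comp1 (F.map1 (gen a)) (F.map1 z)) (ev_pathOf gen hfree h)))
    (heq_of_eq (congrArg (fun z => F.map1 (A.comp1 (gen a) z)) (ev_pathOf gen hfree h)))
    (B.hwhiskL rfl rfl rfl HEq.rfl rfl.heq
      (heq_of_eq (congrArg F.map1 (ev_pathOf gen hfree h)))
      (e0_heq gen F hfree h).symm)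
    (hcomp2 F rfl (ev_pathOf gen hfree h))

theorem e0_cons {X Y Z : A.Obj} (f : A.Hom X Y) (b : E Y Z) :
    HEq (e0 gen F hfree (A.comp1 f (gen b)))
      (B.vcomp2 (B.whiskR (e0 gen F hfree f) (F.map1 (gen b))) (F.comp2 f (gen b))) := by
  refine ((e0_heq gen F hfree _).trans ?_)
  rw [pathOf_cons gen hfree]
  refine (heq_of_eq (eP_cons gen F (pathOf gen hfree f) b)).trans ?_
  exact B.hvcomp rfl rfl
    rfl.heq
    (heq_of_eq (congrArg (fun z => B.comp1 (F.map1 z) (F.map1 (gen b))) (ev_pathOf gen hfree f)))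
    (heq_of_eq (congrArg (fun z => F.map1 (A.comp1 z (gen b))) (ev_pathOf gen hfree f)))
    (B.hwhiskR rfl rfl rfl rfl.heq
      (heq_of_eq (congrArg F.map1 (ev_pathOf gen hfree f)))
      HEq.rfl
      (e0_heq gen F hfree f).symm)
    (hcomp2 F (ev_pathOf gen hfree f) rfl)

theorem e0_gen_eq1 {X Y : A.Obj} (b : E X Y) :
    map1b gen F hfree (gen b) = F.map1 (gen b) := by
  unfold map1b
  rw [pathOf_gen gen hfree, mapR_cons, mapR_nil, B.id_comp1]

theorem e0_gen_id {X Y : A.Obj} (b : E X Y) :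
    HEq (e0 gen F hfree (gen b)) (B.id2 (F.map1 (gen b))) := by
  refine ((e0_heq gen F hfree _).trans ?_)
  rw [pathOf_gen gen hfree]
  refine (heq_of_eq (eP_cons gen F (GPath.nil X) b)).trans ?_
  exact unitL' F (gen b)

/-- The `2`-cell part of the strictification. -/
noncomputable def map2b {X Y : A.Obj} {f g : A.Hom X Y} (φ : A.Two f g) :
    B.Two (map1b gen F hfree f) (map1b gen F hfree g) :=
  B.vcomp2 (B.vcomp2 (e0 gen F hfree f) (F.map2 φ)) (e0inv gen F hfree g)

theorem hmap2b {X Y : A.Obj} {f f' g g' : A.Hom X Y} (hf : f = f') (hg : g = g')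
    {φ : A.Two f g} {φ' : A.Two f' g'} (hφ : HEq φ φ') :
    HEq (map2b gen F hfree φ) (map2b gen F hfree φ') := by
  subst hf; subst hg; cases hφ; rfl

theorem map2b_comp_e0 {X Y : A.Obj} {f g : A.Hom X Y} (φ : A.Two f g) :
    B.vcomp2 (map2b gen F hfree φ) (e0 gen F hfree g)
      = B.vcomp2 (e0 gen F hfree f) (F.map2 φ) := by
  unfold map2b
  rw [B.vcomp2_assoc, e0inv_vcomp_e0, B.vcomp2_id]

end Fbar
section Fbar2

variable {A : TwoCat.{u}} {B : TwoCat.{v}} {E : A.Obj → A.Obj → Type u}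
variable (gen : ∀ {X Y : A.Obj}, E X Y → A.Hom X Y) (F : TwoPseudoFunctor A B)
variable (hfree : ∀ X Y : A.Obj,
      Function.Bijective (fun ρ : GPath E X Y => evalP A (fun {_ _} e => gen e) ρ))

theorem map1b_id (X : A.Obj) : map1b gen F hfree (A.id1 X) = B.id1 (F.obj X) := by
  unfold map1b
  rw [pathOf_id gen hfree]
  rfl

theorem map1b_comp {X Y Z : A.Obj} (f : A.Hom X Y) (g : A.Hom Y Z) :
    map1b gen F hfree (A.comp1 f g)
      = B.comp1 (map1b gen F hfree f) (map1b gen F hfree g) := by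
  unfold map1b
  rw [pathOf_comp gen hfree, mapR_concat]

theorem map2b_id {X Y : A.Obj} (f : A.Hom X Y) :
    map2b gen F hfree (A.id2 f) = B.id2 (map1b gen F hfree f) := by
  unfold map2b
  rw [F.map2_id, B.vcomp2_id, e0_vcomp_e0inv]

theorem map2b_vcomp {X Y : A.Obj} {f g h : A.Hom X Y} (φ : A.Two f g) (ψ : A.Two g h) :
    map2b gen F hfree (A.vcomp2 φ ψ)
      = B.vcomp2 (map2b gen F hfree φ) (map2b gen F hfree ψ) := by
  unfold map2b
  rw [F.map2_vcomp]
  conv_lhs => rw [← B.vcomp2_assoc (e0 gen F hfree f) (F.map2 φ) (F.map2 ψ),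
    B.vcomp2_assoc]
  conv_rhs => rw [B.vcomp2_assoc (B.vcomp2 (e0 gen F hfree f) (F.map2 φ))
      (e0inv gen F hfree g),
    B.vcomp2_assoc (e0 gen F hfree g) (F.map2 ψ) (e0inv gen F hfree h),
    ← B.vcomp2_assoc (e0inv gen F hfree g) (e0 gen F hfree g),
    e0inv_vcomp_e0 gen F hfree g, B.id_vcomp2]

theorem map2b_whiskL_gen {X Y Z : A.Obj} (a : E X Y) {g h : A.Hom Y Z} (ψ : A.Two g h) :
    HEq (map2b gen F hfree (A.whiskL (gen a) ψ))
      (B.whiskL (F.map1 (gen a)) (map2b gen F hfree ψ)) := by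
  have LEq := map2b_comp_e0 gen F hfree (A.whiskL (gen a) ψ)
  have REq : B.vcomp2 (B.whiskL (F.map1 (gen a)) (map2b gen F hfree ψ))
        (B.vcomp2 (B.whiskL (F.map1 (gen a)) (e0 gen F hfree h)) (F.comp2 (gen a) h))
      = B.vcomp2
          (B.vcomp2 (B.whiskL (F.map1 (gen a)) (e0 gen F hfree g)) (F.comp2 (gen a) g))
          (F.map2 (A.whiskL (gen a) ψ)) := by
    rw [← B.vcomp2_assoc, ← B.whiskL_vcomp2, map2b_comp_e0, B.whiskL_vcomp2,
      B.vcomp2_assoc, F.comp2_natL, ← B.vcomp2_assoc]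
  have mid : HEq
      (B.vcomp2 (e0 gen F hfree (A.comp1 (gen a) g)) (F.map2 (A.whiskL (gen a) ψ)))
      (B.vcomp2
        (B.vcomp2 (B.whiskL (F.map1 (gen a)) (e0 gen F hfree g)) (F.comp2 (gen a) g))
        (F.map2 (A.whiskL (gen a) ψ))) :=
    B.hvcomp rfl rfl (heq_of_eq (map1b_fcons gen F hfree a g)) HEq.rfl HEq.rfl
      (e0_fcons gen F hfree a g) HEq.rfl
  have chain : HEq
      (B.vcomp2 (map2b gen F hfree (A.whiskL (gen a) ψ))
        (e0 gen F hfree (A.comp1 (gen a) h)))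
      (B.vcomp2 (B.whiskL (F.map1 (gen a)) (map2b gen F hfree ψ))
        (B.vcomp2 (B.whiskL (F.map1 (gen a)) (e0 gen F hfree h)) (F.comp2 (gen a) h))) :=
    (heq_of_eq LEq).trans (mid.trans (heq_of_eq REq.symm))
  exact B.hcancel_right (map1b_fcons gen F hfree a g) (map1b_fcons gen F hfree a h) rfl
    (e0_fcons gen F hfree a h) (e0_invertible gen F hfree _) chain

theorem map2b_whiskR_gen {X Y Z : A.Obj} {f g : A.Hom X Y} (ψ : A.Two f g) (b : E Y Z) :
    HEq (map2b gen F hfree (A.whiskR ψ (gen b)))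
      (B.whiskR (map2b gen F hfree ψ) (F.map1 (gen b))) := by
  have LEq := map2b_comp_e0 gen F hfree (A.whiskR ψ (gen b))
  have REq : B.vcomp2 (B.whiskR (map2b gen F hfree ψ) (F.map1 (gen b)))
        (B.vcomp2 (B.whiskR (e0 gen F hfree g) (F.map1 (gen b))) (F.comp2 g (gen b)))
      = B.vcomp2
          (B.vcomp2 (B.whiskR (e0 gen F hfree f) (F.map1 (gen b))) (F.comp2 f (gen b)))
          (F.map2 (A.whiskR ψ (gen b))) := by
    rw [← B.vcomp2_assoc, ← B.whiskR_vcomp2, map2b_comp_e0, B.whiskR_vcomp2,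
      B.vcomp2_assoc, F.comp2_natR, ← B.vcomp2_assoc]
  have mid : HEq
      (B.vcomp2 (e0 gen F hfree (A.comp1 f (gen b))) (F.map2 (A.whiskR ψ (gen b))))
      (B.vcomp2
        (B.vcomp2 (B.whiskR (e0 gen F hfree f) (F.map1 (gen b))) (F.comp2 f (gen b)))
        (F.map2 (A.whiskR ψ (gen b)))) :=
    B.hvcomp rfl rfl (heq_of_eq (map1b_cons gen F hfree f b)) HEq.rfl HEq.rfl
      (e0_cons gen F hfree f b) HEq.rfl
  have chain : HEq
      (B.vcomp2 (map2b gen F hfree (A.whiskR ψ (gen b)))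
        (e0 gen F hfree (A.comp1 g (gen b))))
      (B.vcomp2 (B.whiskR (map2b gen F hfree ψ) (F.map1 (gen b)))
        (B.vcomp2 (B.whiskR (e0 gen F hfree g) (F.map1 (gen b))) (F.comp2 g (gen b)))) :=
    (heq_of_eq LEq).trans (mid.trans (heq_of_eq REq.symm))
  exact B.hcancel_right (map1b_cons gen F hfree f b) (map1b_cons gen F hfree g b) rfl
    (e0_cons gen F hfree g b) (e0_invertible gen F hfree _) chain

theorem map2b_whiskL_path {X Y : A.Obj} (q : GPath E X Y) :
    ∀ {Z : A.Obj} {g h : A.Hom Y Z} (ψ : A.Two g h),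
      HEq (map2b gen F hfree (A.whiskL (evR gen q) ψ))
        (B.whiskL (map1b gen F hfree (evR gen q)) (map2b gen F hfree ψ)) := by
  induction q with
  | nil =>
    intro Z g h ψ
    have l1 : HEq (map2b gen F hfree (A.whiskL (A.id1 _) ψ)) (map2b gen F hfree ψ) :=
      hmap2b gen F hfree (A.id_comp1 g) (A.id_comp1 h) (A.whiskL_id1 ψ)
    have l2 : HEq (B.whiskL (map1b gen F hfree (A.id1 _)) (map2b gen F hfree ψ))
        (map2b gen F hfree ψ) := by
      refine HEq.trans ?_ (B.whiskL_id1 (map2b gen F hfree ψ))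
      exact B.hwhiskL rfl rfl rfl (heq_of_eq (map1b_id gen F hfree _)) HEq.rfl HEq.rfl
        HEq.rfl
    exact l1.trans l2.symm
  | cons q' b ih =>
    intro Z g h ψ
    have l1 : HEq (map2b gen F hfree (A.whiskL (A.comp1 (evR gen q') (gen b)) ψ))
        (map2b gen F hfree (A.whiskL (evR gen q') (A.whiskL (gen b) ψ))) :=
      hmap2b gen F hfree (A.comp1_assoc _ _ g) (A.comp1_assoc _ _ h)
        (A.whiskL_comp1 (evR gen q') (gen b) ψ)
    have l2 := ih (A.whiskL (gen b) ψ)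
    have l3 : HEq (B.whiskL (map1b gen F hfree (evR gen q'))
          (map2b gen F hfree (A.whiskL (gen b) ψ)))
        (B.whiskL (map1b gen F hfree (evR gen q'))
          (B.whiskL (F.map1 (gen b)) (map2b gen F hfree ψ))) :=
      B.hwhiskL rfl rfl rfl HEq.rfl
        (heq_of_eq (map1b_fcons gen F hfree b g))
        (heq_of_eq (map1b_fcons gen F hfree b h))
        (map2b_whiskL_gen gen F hfree b ψ)
    have l4 : HEq (B.whiskL (map1b gen F hfree (evR gen q'))
          (B.whiskL (F.map1 (gen b)) (map2b gen F hfree ψ)))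
        (B.whiskL (map1b gen F hfree (A.comp1 (evR gen q') (gen b)))
          (map2b gen F hfree ψ)) := by
      refine HEq.trans (B.whiskL_comp1 _ _ _).symm ?_
      exact B.hwhiskL rfl rfl rfl
        (heq_of_eq (map1b_cons gen F hfree (evR gen q') b).symm) HEq.rfl HEq.rfl HEq.rfl
    exact ((l1.trans l2).trans l3).trans l4

theorem map2b_whiskR_path {Y Z : A.Obj} (q : GPath E Y Z) :
    ∀ {X : A.Obj} {f g : A.Hom X Y} (ψ : A.Two f g),
      HEq (map2b gen F hfree (A.whiskR ψ (evR gen q)))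
        (B.whiskR (map2b gen F hfree ψ) (map1b gen F hfree (evR gen q))) := by
  induction q with
  | nil =>
    intro X f g ψ
    have l1 : HEq (map2b gen F hfree (A.whiskR ψ (A.id1 _))) (map2b gen F hfree ψ) :=
      hmap2b gen F hfree (A.comp1_id f) (A.comp1_id g) (A.whiskR_id1 ψ)
    have l2 : HEq (B.whiskR (map2b gen F hfree ψ) (map1b gen F hfree (A.id1 _)))
        (map2b gen F hfree ψ) := by
      refine HEq.trans ?_ (B.whiskR_id1 (map2b gen F hfree ψ))
      exact B.hwhiskR rfl rfl rfl HEq.rfl HEq.rfl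
        (heq_of_eq (map1b_id gen F hfree _)) HEq.rfl
    exact l1.trans l2.symm
  | cons q' b ih =>
    intro X f g ψ
    have l1 : HEq (map2b gen F hfree (A.whiskR ψ (A.comp1 (evR gen q') (gen b))))
        (map2b gen F hfree (A.whiskR (A.whiskR ψ (evR gen q')) (gen b))) :=
      hmap2b gen F hfree (A.comp1_assoc f _ _).symm (A.comp1_assoc g _ _).symm
        (A.whiskR_comp1 ψ (evR gen q') (gen b))
    have l2 : HEq (map2b gen F hfree (A.whiskR (A.whiskR ψ (evR gen q')) (gen b)))
        (B.whiskR (map2b gen F hfree (A.whiskR ψ (evR gen q'))) (F.map1 (gen b))) :=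
      map2b_whiskR_gen gen F hfree (A.whiskR ψ (evR gen q')) b
    have l3 : HEq (B.whiskR (map2b gen F hfree (A.whiskR ψ (evR gen q'))) (F.map1 (gen b)))
        (B.whiskR (B.whiskR (map2b gen F hfree ψ) (map1b gen F hfree (evR gen q')))
          (F.map1 (gen b))) :=
      B.hwhiskR rfl rfl rfl
        (heq_of_eq (map1b_comp gen F hfree f (evR gen q')))
        (heq_of_eq (map1b_comp gen F hfree g (evR gen q')))
        HEq.rfl (ih ψ)
    have l4 : HEq (B.whiskR (B.whiskR (map2b gen F hfree ψ) (map1b gen F hfree (evR gen q')))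
          (F.map1 (gen b)))
        (B.whiskR (map2b gen F hfree ψ)
          (map1b gen F hfree (A.comp1 (evR gen q') (gen b)))) := by
      refine HEq.trans (B.whiskR_comp1 _ _ _).symm ?_
      exact B.hwhiskR rfl rfl rfl HEq.rfl HEq.rfl
        (heq_of_eq (map1b_cons gen F hfree (evR gen q') b).symm) HEq.rfl
    exact ((l1.trans l2).trans l3).trans l4

theorem map2b_whiskL {X Y Z : A.Obj} (f : A.Hom X Y) {g h : A.Hom Y Z} (ψ : A.Two g h) :
    HEq (map2b gen F hfree (A.whiskL f ψ))
      (B.whiskL (map1b gen F hfree f) (map2b gen F hfree ψ)) := by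
  have := map2b_whiskL_path gen F hfree (pathOf gen hfree f) ψ
  rwa [ev_pathOf gen hfree f] at this

theorem map2b_whiskR {X Y Z : A.Obj} {f g : A.Hom X Y} (ψ : A.Two f g) (h : A.Hom Y Z) :
    HEq (map2b gen F hfree (A.whiskR ψ h))
      (B.whiskR (map2b gen F hfree ψ) (map1b gen F hfree h)) := by
  have := map2b_whiskR_path gen F hfree (pathOf gen hfree h) ψ
  rwa [ev_pathOf gen hfree h] at this

/-- The strictification of `F`. -/
noncomputable def Fbar : TwoFunctor A B where
  obj := F.obj
  map1 := map1b gen F hfree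
  map2 := map2b gen F hfree
  map1_id := map1b_id gen F hfree
  map1_comp := map1b_comp gen F hfree
  map2_id := map2b_id gen F hfree
  map2_vcomp := map2b_vcomp gen F hfree
  map2_whiskL := fun {X Y Z} f {g h} φ => map2b_whiskL gen F hfree f φ
  map2_whiskR := fun {X Y Z} {f g} φ h => map2b_whiskR gen F hfree φ h

end Fbar2
theorem TwoFunctor.ext' {A : TwoCat.{u}} {B : TwoCat.{v}} {F1 F2 : TwoFunctor A B}
    (h0 : ∀ X, F1.obj X = F2.obj X)
    (h1 : ∀ {X Y : A.Obj} (f : A.Hom X Y), HEq (F1.map1 f) (F2.map1 f))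
    (h2 : ∀ {X Y : A.Obj} {f g : A.Hom X Y} (φ : A.Two f g), HEq (F1.map2 φ) (F2.map2 φ)) :
    F1 = F2 := by
  obtain ⟨o1, m1, t1, _, _, _, _, _, _⟩ := F1
  obtain ⟨o2, m2, t2, _, _, _, _, _, _⟩ := F2
  simp only at h0 h1 h2
  have ho : o1 = o2 := funext h0
  subst ho
  have hm : @m1 = @m2 := by
    funext X Y f
    exact eq_of_heq (h1 f)
  subst hm
  have ht : @t1 = @t2 := by
    funext X Y f g φ
    exact eq_of_heq (h2 φ)
  subst ht
  rfl
/-! ## Statement 0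

Let `A`, `B` be 2-categories with the underlying category of `A` free on a
graph, and let `(F, ι, χ) : A → B` be a pseudofunctor.  Then there is a
unique strict 2-functor `F̄ : A → B` agreeing with `F` on objects and
generating morphisms, together with an invertible icon `e : F̄ → F` whose
component at an identity is the unitor `ι`, whose component at each generating
morphism is the identity, whose component at a composite `h∘g` with `g`
generating is the pasting of `e_h` with the compositor `χ`, and such that
`F̄` acts on a 2-cell `φ : f ⇒ g` by the conjugate `e_g⁻¹ ∘ Fφ ∘ e_f`. -/
theorem stmt0_strictification_of_pseudofunctors_out_of_free_two_categories
    (A : TwoCat.{u}) (B : TwoCat.{v}) (E : A.Obj → A.Obj → Type u)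
    (gen : ∀ {X Y : A.Obj}, E X Y → A.Hom X Y)
    (hfree : ∀ X Y : A.Obj,
      Function.Bijective (fun ρ : GPath E X Y => evalP A (fun {_ _} e => gen e) ρ))
    (F : TwoPseudoFunctor A B) :
    ∃ (Fbar : TwoFunctor A B) (hobj : ∀ X : A.Obj, Fbar.obj X = F.obj X)
      (e : ∀ {X Y : A.Obj} (f : A.Hom X Y),
        B.Two (B.castHom (hobj X) (hobj Y) (Fbar.map1 f)) (F.map1 f))
      (einv : ∀ {X Y : A.Obj} (f : A.Hom X Y),
        B.Two (F.map1 f) (B.castHom (hobj X) (hobj Y) (Fbar.map1 f))),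
      -- `F̄` agrees with `F` on generating morphisms and `e` is an invertible icon
      ((∀ {X Y : A.Obj} (a : E X Y), HEq (Fbar.map1 (gen a)) (F.map1 (gen a))) ∧
        (∀ {X Y : A.Obj} (f : A.Hom X Y),
          B.vcomp2 (e f) (einv f) = B.id2 _ ∧ B.vcomp2 (einv f) (e f) = B.id2 _)) ∧
      -- the component at an identity (the empty path) is the unitor of `F`
      (∀ X : A.Obj, HEq (e (A.id1 X)) (F.unitor X)) ∧
      -- the component at a generating morphism is the identity
      (∀ {X Y : A.Obj} (a : E X Y), B.IsIdentity2 (e (gen a))) ∧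
      -- the component at a composite `h∘g` with `g` generating is the pasting
      -- of `e_h` with the compositor `χ_{h,g}`
      (∀ {X Y Z : A.Obj} (a : E X Y) (h : A.Hom Y Z),
        HEq (e (A.comp1 (gen a) h))
          (B.vcomp2 (B.whiskL (F.map1 (gen a)) (e h)) (F.comp2 (gen a) h))) ∧
      -- `F̄` acts on 2-cells by `e_g⁻¹ ∘ Fφ ∘ e_f`
      (∀ {X Y : A.Obj} {f g : A.Hom X Y} (φ : A.Two f g),
        HEq (Fbar.map2 φ) (B.vcomp2 (B.vcomp2 (e f) (F.map2 φ)) (einv g))) ∧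
      -- uniqueness of the pair `(F̄, e)`
      (∀ (Fbar' : TwoFunctor A B) (hobj' : ∀ X : A.Obj, Fbar'.obj X = F.obj X)
        (e' : ∀ {X Y : A.Obj} (f : A.Hom X Y),
          B.Two (B.castHom (hobj' X) (hobj' Y) (Fbar'.map1 f)) (F.map1 f))
        (einv' : ∀ {X Y : A.Obj} (f : A.Hom X Y),
          B.Two (F.map1 f) (B.castHom (hobj' X) (hobj' Y) (Fbar'.map1 f))),
        ((∀ {X Y : A.Obj} (a : E X Y), HEq (Fbar'.map1 (gen a)) (F.map1 (gen a))) ∧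
          (∀ {X Y : A.Obj} (f : A.Hom X Y),
            B.vcomp2 (e' f) (einv' f) = B.id2 _ ∧ B.vcomp2 (einv' f) (e' f) = B.id2 _)) →
        (∀ X : A.Obj, HEq (e' (A.id1 X)) (F.unitor X)) →
        (∀ {X Y : A.Obj} (a : E X Y), B.IsIdentity2 (e' (gen a))) →
        (∀ {X Y Z : A.Obj} (a : E X Y) (h : A.Hom Y Z),
          HEq (e' (A.comp1 (gen a) h))
            (B.vcomp2 (B.whiskL (F.map1 (gen a)) (e' h)) (F.comp2 (gen a) h))) →
        (∀ {X Y : A.Obj} {f g : A.Hom X Y} (φ : A.Two f g),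
          HEq (Fbar'.map2 φ) (B.vcomp2 (B.vcomp2 (e' f) (F.map2 φ)) (einv' g))) →
        Fbar' = Fbar ∧ HEq @e' @e) := by
  refine ⟨Fbar gen F hfree, fun _ => rfl,
    fun {X Y} f => e0 gen F hfree f, fun {X Y} f => e0inv gen F hfree f,
    ⟨fun {X Y} a => heq_of_eq (e0_gen_eq1 gen F hfree a),
     fun {X Y} f => ⟨e0_vcomp_e0inv gen F hfree f, e0inv_vcomp_e0 gen F hfree f⟩⟩,
    fun X => e0_id gen F hfree X,
    fun {X Y} a => ⟨e0_gen_eq1 gen F hfree a,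
      (e0_gen_id gen F hfree a).trans
        (B.hcongr_id2 rfl rfl (heq_of_eq (e0_gen_eq1 gen F hfree a).symm))⟩,
    fun {X Y Z} a h => e0_fcons gen F hfree a h,
    fun {X Y} {f g} φ => HEq.rfl,
    ?_⟩
  intro Fbar' hobj' e' einv' hmain hunit hgenid hfront hconj
  obtain ⟨hgen1, hinv'⟩ := hmain
  -- `Fbar'` agrees with `map1b` on all 1-cells
  have U2p : ∀ {X Y : A.Obj} (q : GPath E X Y),
      HEq (Fbar'.map1 (evR gen q)) (map1b gen F hfree (evR gen q)) := by
    intro X Y q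
    induction q with
    | nil =>
      exact (heq_of_eq (Fbar'.map1_id X)).trans
        ((B.hcongr_id1 (hobj' X)).trans (heq_of_eq (map1b_id gen F hfree X).symm))
    | cons q' b ih =>
      refine (heq_of_eq (Fbar'.map1_comp (evR gen q') (gen b))).trans ?_
      refine HEq.trans ?_ (heq_of_eq (map1b_cons gen F hfree (evR gen q') b).symm)
      exact B.hcongr_comp1 (hobj' X) (hobj' _) (hobj' _) ih (hgen1 b)
  have U2 : ∀ {X Y : A.Obj} (f : A.Hom X Y),
      HEq (Fbar'.map1 f) (map1b gen F hfree f) := by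
    intro X Y f
    have := U2p (pathOf gen hfree f)
    rwa [ev_pathOf gen hfree f] at this
  -- `e'` agrees with `e0` on all 1-cells
  have U3 : ∀ {X Y : A.Obj} (f : A.Hom X Y), HEq (e' f) (e0 gen F hfree f) := by
    have key : ∀ (n : ℕ) {X Y : A.Obj} (f : A.Hom X Y),
        GPath.glen (pathOf gen hfree f) ≤ n → HEq (e' f) (e0 gen F hfree f) := by
      intro n
      induction n with
      | zero =>
        intro X Y f hn
        rcases GPath.decomp (pathOf gen hfree f) with ⟨hXY, hp⟩ | ⟨Z, a, q, hq⟩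
        · subst hXY
          have hpe : pathOf gen hfree f = GPath.nil X := eq_of_heq hp
          have hf : f = A.id1 X := by rw [← ev_pathOf gen hfree f, hpe]; rfl
          subst hf
          exact (hunit X).trans (e0_id gen F hfree X).symm
        · exfalso
          rw [hq, GPath.glen_fcons] at hn
          omega
      | succ n ihn =>
        intro X Y f hn
        rcases GPath.decomp (pathOf gen hfree f) with ⟨hXY, hp⟩ | ⟨Z, a, q, hq⟩
        · subst hXY
          have hpe : pathOf gen hfree f = GPath.nil X := eq_of_heq hp
          have hf : f = A.id1 X := by rw [← ev_pathOf gen hfree f, hpe]; rfl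
          subst hf
          exact (hunit X).trans (e0_id gen F hfree X).symm
        · have hf : f = A.comp1 (gen a) (evR gen q) := by
            rw [← ev_pathOf gen hfree f, hq, evR_fcons]
          have hlen : GPath.glen (pathOf gen hfree (evR gen q)) ≤ n := by
            rw [pathOf_ev gen hfree q]
            rw [hq, GPath.glen_fcons] at hn
            omega
          have ihq := ihn (evR gen q) hlen
          subst hf
          refine (hfront a (evR gen q)).trans ?_
          refine HEq.trans ?_ (e0_fcons gen F hfree a (evR gen q)).symm
          have hbd : HEq (B.castHom (hobj' _) (hobj' _) (Fbar'.map1 (evR gen q)))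
              (map1b gen F hfree (evR gen q)) :=
            (B.heq_castHom (hobj' _) (hobj' _) _).trans (U2 (evR gen q))
          refine B.hvcomp rfl rfl ?_ HEq.rfl HEq.rfl ?_ HEq.rfl
          · exact B.hcongr_comp1 rfl rfl rfl HEq.rfl hbd
          · exact B.hwhiskL rfl rfl rfl HEq.rfl hbd HEq.rfl ihq
    exact fun {X Y} f => key (GPath.glen (pathOf gen hfree f)) f le_rfl
  -- `einv'` agrees with `e0inv`
  have U4 : ∀ {X Y : A.Obj} (f : A.Hom X Y),
      HEq (einv' f) (e0inv gen F hfree f) := by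
    intro X Y f
    have hfb : B.castHom (hobj' X) (hobj' Y) (Fbar'.map1 f) = map1b gen F hfree f :=
      eq_of_heq ((B.heq_castHom (hobj' X) (hobj' Y) _).trans (U2 f))
    exact B.hinv_unique hfb rfl (U3 f) (hinv' f).1 (hinv' f).2
      (e0_vcomp_e0inv gen F hfree f) (e0inv_vcomp_e0 gen F hfree f)
  -- `Fbar'.map2` agrees with `map2b`
  have U5 : ∀ {X Y : A.Obj} {f g : A.Hom X Y} (φ : A.Two f g),
      HEq (Fbar'.map2 φ) (map2b gen F hfree φ) := by
    intro X Y f g φ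
    refine (hconj φ).trans ?_
    have hbf : HEq (B.castHom (hobj' X) (hobj' Y) (Fbar'.map1 f))
        (map1b gen F hfree f) := (B.heq_castHom _ _ _).trans (U2 f)
    have hbg : HEq (B.castHom (hobj' X) (hobj' Y) (Fbar'.map1 g))
        (map1b gen F hfree g) := (B.heq_castHom _ _ _).trans (U2 g)
    exact B.hvcomp rfl rfl hbf HEq.rfl hbg
      (B.hvcomp rfl rfl hbf HEq.rfl HEq.rfl (U3 f) HEq.rfl) (U4 g)
  have hFeq : Fbar' = Fbar gen F hfree :=
    TwoFunctor.ext' (fun X => hobj' X) (fun {X Y} f => U2 f) (fun {X Y f g} φ => U5 φ)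
  refine ⟨hFeq, ?_⟩
  subst hFeq
  refine heq_of_eq ?_
  funext X Y f
  exact eq_of_heq (U3 f)
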